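/- (Le Page's theorem) Let A be a unital complex Banach algebra for which there exists γ > 0 satisfying ‖ab‖ ≤ γ‖ba‖ for all a, b ∈ A. Then A is commutative. -/

import Mathlib

open NormedSpace Bornology

theorem stmt_4 (A : Type*) [NormedRing A] [NormedAlgebra ℂ A] [CompleteSpace A]
    (γ : ℝ) (hγ : 0 < γ) (hLP : ∀ a b : A, ‖a * b‖ ≤ γ * ‖b * a‖) :
    ∀ a b : A, a * b = b * a := by
  intro a b
  have h1 : ∀ z : ℂ, HasDerivAt (fun u : ℂ => exp (u • a)) (exp (z • a) * a) z :=
    fun z => hasDerivAt_exp_smul_const a z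
  have h2 : ∀ z : ℂ, HasDerivAt (fun u : ℂ => exp ((-u) • a))
      ((-1 : ℂ) • (exp ((-z) • a) * a)) z := by
    intro z
    exact HasDerivAt.scomp z (hasDerivAt_exp_smul_const a (-z)) (hasDerivAt_neg z)
  have hdiff : Differentiable ℂ (fun z : ℂ => exp (z • a) * b * exp ((-z) • a)) := by
    intro z
    exact (((h1 z).mul_const b).mul (h2 z)).differentiableAt
  have hinv : ∀ z : ℂ, exp ((-z) • a) * exp (z • a) = 1 := by
    intro z
    have hc : Commute ((-z) • a) (z • a) := ((Commute.refl a).smul_left (-z)).smul_right z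
    let +nondep : NormedAlgebra ℚ A := NormedAlgebra.restrictScalars ℚ ℂ A
    rw [← exp_add_of_commute hc]
    simp [← add_smul]
  have hbound : IsBounded (Set.range (fun z : ℂ => exp (z • a) * b * exp ((-z) • a))) := by
    rw [isBounded_iff_forall_norm_le]
    refine ⟨γ * ‖b‖, ?_⟩
    rintro _ ⟨z, rfl⟩
    calc ‖(exp (z • a) * b) * exp ((-z) • a)‖
        ≤ γ * ‖exp ((-z) • a) * (exp (z • a) * b)‖ := hLP _ _
      _ = γ * ‖b‖ := by rw [← mul_assoc, hinv, one_mul]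
  have hconst : ∀ z : ℂ, exp (z • a) * b * exp ((-z) • a) = b := by
    intro z
    have := hdiff.apply_eq_apply_of_bounded hbound z 0
    simpa [exp_zero] using this
  have hcomm : ∀ z : ℂ, exp (z • a) * b = b * exp (z • a) := by
    intro z
    calc exp (z • a) * b = exp (z • a) * b * 1 := (mul_one _).symm
      _ = exp (z • a) * b * (exp ((-z) • a) * exp (z • a)) := by rw [hinv]
      _ = exp (z • a) * b * exp ((-z) • a) * exp (z • a) := (mul_assoc _ _ _).symm
      _ = b * exp (z • a) := by rw [hconst]
  have hg : (fun z : ℂ => exp (z • a) * b - b * exp (z • a)) = fun _ => (0 : A) := by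
    funext z; rw [hcomm z, sub_self]
  have hd1 : HasDerivAt (fun z : ℂ => exp (z • a) * b - b * exp (z • a))
      (exp ((0:ℂ) • a) * a * b - b * (exp ((0:ℂ) • a) * a)) 0 :=
    ((h1 0).mul_const b).sub ((h1 0).const_mul b)
  have hd2 : HasDerivAt (fun _ : ℂ => (0 : A)) 0 (0:ℂ) := hasDerivAt_const 0 0
  rw [hg] at hd1
  have := hd1.unique hd2
  simp only [zero_smul, exp_zero, one_mul, mul_one] at this
  exact sub_eq_zero.mp this
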